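/- Let A, B be n×n positive semidefinite complex matrices and let W₁, W₂ be n×n complex matrices that are contractions with respect to the ℓ²→ℓ² operator norm (‖W₁‖ ≤ 1 and ‖W₂‖ ≤ 1). Then there exists an n×n complex matrix C with ‖C‖ ≤ 1 (ℓ²→ℓ² operator norm) such that A^(1/2) W₁ A^(1/2) + B^(1/2) W₂ B^(1/2) = (A + B)^(1/2) · C · (A + B)^(1/2). -/

import Mathlib

open scoped ComplexOrder Matrix.Norms.L2Operator

/-- The positive semidefinite square root of a positive semidefinite matrix
(the definition `Matrix.PosSemidef.sqrt` of the older Mathlib, removed since). -/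
noncomputable def Matrix.PosSemidef.sqrt {n 𝕜 : Type*} [Fintype n] [DecidableEq n] [RCLike 𝕜]
    {A : Matrix n n 𝕜} (hA : A.PosSemidef) : Matrix n n 𝕜 :=
  hA.1.eigenvectorUnitary.1 * Matrix.diagonal ((↑) ∘ (√·) ∘ hA.1.eigenvalues) *
  (star hA.1.eigenvectorUnitary : Matrix n n 𝕜)

namespace SqrtFactAux

open Matrix

variable {n : ℕ}

/-- Apply a real function to a Hermitian matrix via its eigendecomposition. -/
noncomputable def matFun {M : Matrix (Fin n) (Fin n) ℂ} (hM : M.IsHermitian) (f : ℝ → ℝ) :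
    Matrix (Fin n) (Fin n) ℂ :=
  (hM.eigenvectorUnitary : Matrix (Fin n) (Fin n) ℂ) *
    Matrix.diagonal ((fun x : ℝ => (f x : ℂ)) ∘ hM.eigenvalues) *
    star (hM.eigenvectorUnitary : Matrix (Fin n) (Fin n) ℂ)

lemma matFun_mul {M : Matrix (Fin n) (Fin n) ℂ} (hM : M.IsHermitian) (f g : ℝ → ℝ) :
    matFun hM f * matFun hM g = matFun hM (fun x => f x * g x) := by
  have h1 : star (hM.eigenvectorUnitary : Matrix (Fin n) (Fin n) ℂ) *
      (hM.eigenvectorUnitary : Matrix (Fin n) (Fin n) ℂ) = 1 :=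
    Matrix.UnitaryGroup.star_mul_self _
  have h2 : Matrix.diagonal ((fun x : ℝ => (f x : ℂ)) ∘ hM.eigenvalues) *
      Matrix.diagonal ((fun x : ℝ => (g x : ℂ)) ∘ hM.eigenvalues) =
      Matrix.diagonal ((fun x : ℝ => ((f x * g x : ℝ) : ℂ)) ∘ hM.eigenvalues) := by
    have hv : (fun i => ((fun x : ℝ => (f x : ℂ)) ∘ hM.eigenvalues) i * ((fun x : ℝ => (g x : ℂ)) ∘ hM.eigenvalues) i)
        = (fun x : ℝ => ((f x * g x : ℝ) : ℂ)) ∘ hM.eigenvalues := by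
      funext i; simp [Function.comp]
    rw [Matrix.diagonal_mul_diagonal, hv]
  simp only [matFun, Matrix.mul_assoc]
  rw [← Matrix.mul_assoc (star _) _ (Matrix.diagonal _ * _), h1, Matrix.one_mul,
    ← Matrix.mul_assoc (Matrix.diagonal _) (Matrix.diagonal _), h2]

lemma matFun_star {M : Matrix (Fin n) (Fin n) ℂ} (hM : M.IsHermitian) (f : ℝ → ℝ) :
    (matFun hM f)ᴴ = matFun hM f := by
  have h2 : star ((fun x : ℝ => (f x : ℂ)) ∘ hM.eigenvalues) =
      ((fun x : ℝ => (f x : ℂ)) ∘ hM.eigenvalues) := by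
    funext i; simp [Function.comp]
  have hD : star (Matrix.diagonal ((fun x : ℝ => (f x : ℂ)) ∘ hM.eigenvalues)) =
      Matrix.diagonal ((fun x : ℝ => (f x : ℂ)) ∘ hM.eigenvalues) := by
    rw [Matrix.star_eq_conjTranspose, Matrix.diagonal_conjTranspose, h2]
  simp only [matFun, ← Matrix.star_eq_conjTranspose]
  rw [StarMul.star_mul, StarMul.star_mul, star_star, hD, Matrix.mul_assoc]

lemma matFun_id {M : Matrix (Fin n) (Fin n) ℂ} (hM : M.IsHermitian) :
    matFun hM (fun x => x) = M := (hM.spectral_theorem).symm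

lemma matFun_sqrt {M : Matrix (Fin n) (Fin n) ℂ} (hM : M.PosSemidef) :
    matFun hM.1 Real.sqrt = hM.sqrt := rfl

lemma _root_.Matrix.PosSemidef.posSemidef_sqrt {M : Matrix (Fin n) (Fin n) ℂ} (hM : M.PosSemidef) :
    hM.sqrt.PosSemidef := by
  rw [← matFun_sqrt]
  have hd : (Matrix.diagonal ((fun x : ℝ => ((Real.sqrt x : ℝ) : ℂ)) ∘ hM.1.eigenvalues)).PosSemidef := by
    rw [Matrix.posSemidef_diagonal_iff]
    intro i
    exact Complex.zero_le_real.mpr (Real.sqrt_nonneg _)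
  have := hd.mul_mul_conjTranspose_same (hM.1.eigenvectorUnitary : Matrix (Fin n) (Fin n) ℂ)
  rw [← Matrix.star_eq_conjTranspose] at this
  exact this

lemma _root_.Matrix.PosSemidef.sqrt_mul_self {M : Matrix (Fin n) (Fin n) ℂ} (hM : M.PosSemidef) :
    hM.sqrt * hM.sqrt = M := by
  rw [← matFun_sqrt, matFun_mul]
  conv_rhs => rw [← matFun_id hM.1]
  simp only [matFun]
  congr 3
  funext i
  simp [Real.mul_self_sqrt (hM.eigenvalues_nonneg i)]
  exact_mod_cast Real.mul_self_sqrt (hM.eigenvalues_nonneg i)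

lemma sqrt_mul_eq_zero {A D M : Matrix (Fin n) (Fin n) ℂ} (hA : A.PosSemidef)
    (hDA : (D - A).PosSemidef) (hDM : D * M = 0) : hA.sqrt * M = 0 := by
  have key : ∀ v : Fin n → ℂ, (hA.sqrt * M) *ᵥ v = 0 := by
    intro v
    have h2 := hA.dotProduct_mulVec_nonneg (M *ᵥ v)
    have h3 := hDA.dotProduct_mulVec_nonneg (M *ᵥ v)
    have h4 : D *ᵥ (M *ᵥ v) = 0 := by
      rw [Matrix.mulVec_mulVec, hDM, Matrix.zero_mulVec]
    have h5 : star (M *ᵥ v) ⬝ᵥ ((D - A) *ᵥ (M *ᵥ v)) =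
        - (star (M *ᵥ v) ⬝ᵥ (A *ᵥ (M *ᵥ v))) := by
      rw [Matrix.sub_mulVec, dotProduct_sub, h4, dotProduct_zero]
      ring
    rw [h5] at h3
    have hw : star (M *ᵥ v) ⬝ᵥ (A *ᵥ (M *ᵥ v)) = 0 :=
      le_antisymm (neg_nonneg.mp h3) h2
    have h6 : star (hA.sqrt *ᵥ (M *ᵥ v)) ⬝ᵥ (hA.sqrt *ᵥ (M *ᵥ v)) = 0 := by
      rw [Matrix.star_mulVec, Matrix.dotProduct_mulVec, Matrix.vecMul_vecMul,
        hA.posSemidef_sqrt.1, hA.sqrt_mul_self, ← Matrix.dotProduct_mulVec]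
      exact hw
    rw [← Matrix.mulVec_mulVec]
    exact dotProduct_star_self_eq_zero.mp h6
  ext i j
  have := congrFun (key (Pi.single j 1)) i
  rw [Matrix.mulVec_single] at this
  simpa using this

open ContinuousLinearMap in
lemma clm_norm_bound {E : Type*} [NormedAddCommGroup E] [InnerProductSpace ℂ E] [CompleteSpace E]
    (x y w₁ w₂ p : E →L[ℂ] E) (hw₁ : ‖w₁‖ ≤ 1) (hw₂ : ‖w₂‖ ≤ 1)
    (hp : star x * x + star y * y = p) (hpp : p * p = p) (hps : star p = p) :
    ‖star x * w₁ * x + star y * w₂ * y‖ ≤ 1 := by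
  have hxy : ∀ v : E, ‖x v‖ ^ 2 + ‖y v‖ ^ 2 ≤ ‖v‖ ^ 2 := by
    intro v
    have e1 : (inner ℂ ((star x * x + star y * y) v) v : ℂ) =
        (‖x v‖ : ℂ) ^ 2 + (‖y v‖ : ℂ) ^ 2 := by
      simp only [ContinuousLinearMap.add_apply, ContinuousLinearMap.mul_apply,
        star_eq_adjoint, inner_add_left, adjoint_inner_left]
      rw [inner_self_eq_norm_sq_to_K, inner_self_eq_norm_sq_to_K]
      norm_cast
    have e2 : (inner ℂ (p v) v : ℂ) = (‖p v‖ : ℂ) ^ 2 := by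
      conv_lhs => rw [← hpp]
      have : (p * p) v = adjoint p (p v) := by
        rw [← star_eq_adjoint, hps]; rfl
      rw [this, adjoint_inner_left, inner_self_eq_norm_sq_to_K]
      norm_cast
    have e3 : (‖x v‖ : ℂ) ^ 2 + (‖y v‖ : ℂ) ^ 2 = (‖p v‖ : ℂ) ^ 2 := by
      rw [← e1, hp, e2]
    have e4 : ‖x v‖ ^ 2 + ‖y v‖ ^ 2 = ‖p v‖ ^ 2 := by
      exact_mod_cast e3
    have e5 : ‖p v‖ ≤ ‖v‖ := by
      have c1 : ‖(inner ℂ (p v) v : ℂ)‖ ≤ ‖p v‖ * ‖v‖ := norm_inner_le_norm _ _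
      rw [e2] at c1
      have c2unused : ‖((‖p v‖ : ℂ)) ^ 2‖ = ‖p v‖ ^ 2 := by
        rw [norm_pow, Complex.norm_real, norm_norm]
      rw [norm_pow, Complex.norm_real, norm_norm] at c1
      nlinarith [norm_nonneg (p v), norm_nonneg v]
    rw [e4]
    have := norm_nonneg (p v)
    nlinarith
  set T := star x * w₁ * x + star y * w₂ * y with hT
  have key : ∀ u : E, ‖T u‖ ≤ ‖u‖ := by
    intro u
    have hin : ∀ v : E, ‖(inner ℂ v (T u) : ℂ)‖ ≤ ‖v‖ * ‖u‖ := by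
      intro v
      have hTu : (inner ℂ v (T u) : ℂ) =
          inner ℂ (x v) (w₁ (x u)) + inner ℂ (y v) (w₂ (y u)) := by
        simp only [hT, ContinuousLinearMap.add_apply, ContinuousLinearMap.mul_apply,
          star_eq_adjoint, inner_add_right, adjoint_inner_right]
      rw [hTu]
      have c1 : ‖(inner ℂ (x v) (w₁ (x u)) : ℂ)‖ ≤ ‖x v‖ * ‖x u‖ := by
        refine (norm_inner_le_norm _ _).trans ?_
        have := (w₁.le_opNorm (x u)).trans
          (mul_le_of_le_one_left (norm_nonneg _) hw₁)
        exact mul_le_mul_of_nonneg_left this (norm_nonneg _)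
      have c2 : ‖(inner ℂ (y v) (w₂ (y u)) : ℂ)‖ ≤ ‖y v‖ * ‖y u‖ := by
        refine (norm_inner_le_norm _ _).trans ?_
        have := (w₂.le_opNorm (y u)).trans
          (mul_le_of_le_one_left (norm_nonneg _) hw₂)
        exact mul_le_mul_of_nonneg_left this (norm_nonneg _)
      refine (norm_add_le _ _).trans ((add_le_add c1 c2).trans ?_)
      have hv := hxy v
      have hu := hxy u
      nlinarith [norm_nonneg (x v), norm_nonneg (y v), norm_nonneg (x u),
        norm_nonneg (y u), norm_nonneg v, norm_nonneg u,
        sq_nonneg (‖x v‖ * ‖y u‖ - ‖y v‖ * ‖x u‖),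
        mul_nonneg (norm_nonneg v) (norm_nonneg u),
        mul_le_mul hv hu (by positivity) (by positivity)]
    have h1 := hin (T u)
    have h2 : ‖(inner ℂ (T u) (T u) : ℂ)‖ = ‖T u‖ ^ 2 := by
      rw [inner_self_eq_norm_sq_to_K]
      rw [norm_pow, RCLike.norm_ofReal, abs_norm]
    rw [h2] at h1
    nlinarith [norm_nonneg (T u), norm_nonneg u]
  refine (opNorm_le_bound _ zero_le_one fun u => ?_)
  rw [one_mul]
  exact key u

set_option maxHeartbeats 1000000 in
lemma mat_norm_bound {n : ℕ} (X Y w₁ w₂ P : Matrix (Fin n) (Fin n) ℂ)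
    (hw₁ : ‖w₁‖ ≤ 1) (hw₂ : ‖w₂‖ ≤ 1)
    (hp : Xᴴ * X + Yᴴ * Y = P) (hpp : P * P = P) (hps : Pᴴ = P) :
    ‖Xᴴ * w₁ * X + Yᴴ * w₂ * Y‖ ≤ 1 := by
  have hmap := congrArg (Matrix.toEuclideanCLM (n := Fin n) (𝕜 := ℂ)) hp
  simp only [map_add, _root_.map_mul, ← Matrix.star_eq_conjTranspose, map_star] at hmap
  have hmpp := congrArg (Matrix.toEuclideanCLM (n := Fin n) (𝕜 := ℂ)) hpp
  simp only [_root_.map_mul] at hmpp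
  have hmps := congrArg (Matrix.toEuclideanCLM (n := Fin n) (𝕜 := ℂ)) hps
  simp only [← Matrix.star_eq_conjTranspose, map_star] at hmps
  have hb := clm_norm_bound (Matrix.toEuclideanCLM (n := Fin n) (𝕜 := ℂ) X)
    (Matrix.toEuclideanCLM (n := Fin n) (𝕜 := ℂ) Y)
    (Matrix.toEuclideanCLM (n := Fin n) (𝕜 := ℂ) w₁)
    (Matrix.toEuclideanCLM (n := Fin n) (𝕜 := ℂ) w₂)
    (Matrix.toEuclideanCLM (n := Fin n) (𝕜 := ℂ) P)
    (by rw [← Matrix.cstar_norm_def]; exact hw₁)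
    (by rw [← Matrix.cstar_norm_def]; exact hw₂) hmap hmpp hmps
  rw [Matrix.cstar_norm_def]
  simp only [map_add, _root_.map_mul, ← Matrix.star_eq_conjTranspose, map_star]
  exact hb

end SqrtFactAux

theorem sqrt_contraction_sqrt_factorization {n : ℕ}
    (A B W₁ W₂ : Matrix (Fin n) (Fin n) ℂ)
    (hA : A.PosSemidef) (hB : B.PosSemidef)
    (hW₁ : ‖W₁‖ ≤ 1) (hW₂ : ‖W₂‖ ≤ 1) :
    ∃ C : Matrix (Fin n) (Fin n) ℂ, ‖C‖ ≤ 1 ∧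
      hA.sqrt * W₁ * hA.sqrt + hB.sqrt * W₂ * hB.sqrt =
        (hA.add hB).sqrt * C * (hA.add hB).sqrt := by
  classical
  have hS : ((hA.add hB).sqrt).PosSemidef := (hA.add hB).posSemidef_sqrt
  set S : Matrix (Fin n) (Fin n) ℂ := (hA.add hB).sqrt with hSdef
  have hsqS : S * S = A + B := (hA.add hB).sqrt_mul_self
  set T : Matrix (Fin n) (Fin n) ℂ :=
    SqrtFactAux.matFun hS.1 (fun u => if u = 0 then 0 else u⁻¹) with hTdef
  set P : Matrix (Fin n) (Fin n) ℂ :=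
    SqrtFactAux.matFun hS.1 (fun u => if u = 0 then 0 else 1) with hPdef
  have hid : SqrtFactAux.matFun hS.1 (fun u => u) = S := SqrtFactAux.matFun_id hS.1
  have hTstar : T.conjTranspose = T := SqrtFactAux.matFun_star _ _
  have hPstar : P.conjTranspose = P := SqrtFactAux.matFun_star _ _
  have hTS : T * S = P := by
    have h := SqrtFactAux.matFun_mul hS.1 (fun u => if u = 0 then 0 else u⁻¹) (fun u => u)
    rw [hid] at h
    rw [hTdef, hPdef, h]
    exact congrArg _ (by funext u; by_cases hu : u = 0 <;> simp [hu, inv_mul_cancel₀])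
  have hST : S * T = P := by
    have h := SqrtFactAux.matFun_mul hS.1 (fun u => u) (fun u => if u = 0 then 0 else u⁻¹)
    rw [hid] at h
    rw [hTdef, hPdef, h]
    exact congrArg _ (by funext u; by_cases hu : u = 0 <;> simp [hu, mul_inv_cancel₀])
  have hPP : P * P = P := by
    rw [hPdef, SqrtFactAux.matFun_mul]
    exact congrArg _ (by funext u; by_cases hu : u = 0 <;> simp [hu])
  have hSP : S * P = S := by
    have h := SqrtFactAux.matFun_mul hS.1 (fun u => u) (fun u => if u = 0 then 0 else 1)
    rw [hid] at h
    rw [hPdef, h]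
    exact (congrArg _ (by funext u; by_cases hu : u = 0 <;> simp [hu])).trans hid
  have hAP : hA.sqrt * P = hA.sqrt := by
    have h1 : S * (1 - P) = 0 := by
      rw [Matrix.mul_sub, Matrix.mul_one, hSP, sub_self]
    have hz : (A + B) * (1 - P) = 0 := by
      calc (A + B) * (1 - P) = S * (S * (1 - P)) := by rw [← Matrix.mul_assoc, hsqS]
        _ = 0 := by rw [h1, Matrix.mul_zero]
    have hDA : (A + B - A).PosSemidef := by simpa using hB
    have hker := SqrtFactAux.sqrt_mul_eq_zero hA hDA hz
    rw [Matrix.mul_sub, Matrix.mul_one, sub_eq_zero] at hker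
    exact hker.symm
  have hBP : hB.sqrt * P = hB.sqrt := by
    have h1 : S * (1 - P) = 0 := by
      rw [Matrix.mul_sub, Matrix.mul_one, hSP, sub_self]
    have hz : (A + B) * (1 - P) = 0 := by
      calc (A + B) * (1 - P) = S * (S * (1 - P)) := by rw [← Matrix.mul_assoc, hsqS]
        _ = 0 := by rw [h1, Matrix.mul_zero]
    have hDA : (A + B - B).PosSemidef := by simpa using hA
    have hker := SqrtFactAux.sqrt_mul_eq_zero hB hDA hz
    rw [Matrix.mul_sub, Matrix.mul_one, sub_eq_zero] at hker
    exact hker.symm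
  have hPA : P * hA.sqrt = hA.sqrt := by
    have h := congrArg Matrix.conjTranspose hAP
    rwa [Matrix.conjTranspose_mul, hPstar, hA.posSemidef_sqrt.1] at h
  have hPB : P * hB.sqrt = hB.sqrt := by
    have h := congrArg Matrix.conjTranspose hBP
    rwa [Matrix.conjTranspose_mul, hPstar, hB.posSemidef_sqrt.1] at h
  have hXc : (hA.sqrt * T).conjTranspose = T * hA.sqrt := by
    rw [Matrix.conjTranspose_mul, hTstar, hA.posSemidef_sqrt.1]
  have hYc : (hB.sqrt * T).conjTranspose = T * hB.sqrt := by
    rw [Matrix.conjTranspose_mul, hTstar, hB.posSemidef_sqrt.1]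
  refine ⟨(hA.sqrt * T).conjTranspose * W₁ * (hA.sqrt * T) + (hB.sqrt * T).conjTranspose * W₂ * (hB.sqrt * T), ?_, ?_⟩
  · -- norm bound
    have hXX : (hA.sqrt * T).conjTranspose * (hA.sqrt * T) + (hB.sqrt * T).conjTranspose * (hB.sqrt * T) = P := by
      rw [hXc, hYc]
      have h1 : T * hA.sqrt * (hA.sqrt * T) = T * A * T := by
        rw [show T * hA.sqrt * (hA.sqrt * T) = T * (hA.sqrt * hA.sqrt) * T by
          noncomm_ring, hA.sqrt_mul_self]
      have h2 : T * hB.sqrt * (hB.sqrt * T) = T * B * T := by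
        rw [show T * hB.sqrt * (hB.sqrt * T) = T * (hB.sqrt * hB.sqrt) * T by
          noncomm_ring, hB.sqrt_mul_self]
      rw [h1, h2, show T * A * T + T * B * T = T * ((A + B) * T) by noncomm_ring, ← hsqS,
        show T * (S * S * T) = (T * S) * (S * T) by noncomm_ring, hTS, hST, hPP]
    exact SqrtFactAux.mat_norm_bound _ _ _ _ _ hW₁ hW₂ hXX hPP hPstar
  · -- the factorization identity
    have e1 : S * (hA.sqrt * T).conjTranspose = hA.sqrt := by
      rw [hXc, ← Matrix.mul_assoc, hST, hPA]
    have e2 : (hA.sqrt * T) * S = hA.sqrt := by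
      rw [Matrix.mul_assoc, hTS, hAP]
    have e3 : S * (hB.sqrt * T).conjTranspose = hB.sqrt := by
      rw [hYc, ← Matrix.mul_assoc, hST, hPB]
    have e4 : (hB.sqrt * T) * S = hB.sqrt := by
      rw [Matrix.mul_assoc, hTS, hBP]
    calc hA.sqrt * W₁ * hA.sqrt + hB.sqrt * W₂ * hB.sqrt
        = (S * (hA.sqrt * T).conjTranspose) * W₁ * ((hA.sqrt * T) * S) +
          (S * (hB.sqrt * T).conjTranspose) * W₂ * ((hB.sqrt * T) * S) := by rw [e1, e2, e3, e4]
      _ = S * ((hA.sqrt * T).conjTranspose * W₁ * (hA.sqrt * T) +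
            (hB.sqrt * T).conjTranspose * W₂ * (hB.sqrt * T)) * S := by noncomm_ring
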